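/- For d ≥ 1 and 0 ≤ j ≤ d, the identity Σ_{i=0}^{d} A(d+1,i,j+1) t^i / (1-t)^{d+1} = Σ_{r≥0} r^j (r+1)^{d-j} t^r holds as formal power series, where A(d+1,i,j+1) counts permutations σ ∈ S_{d+1} with σ(1) = j+1 and i descents. -/

import Mathlib

open Finset

/-- The set of descent positions (0-based: `k ∈ descSet σ` means a descent between
the 1-based positions `k+1` and `k+2`) of a permutation of `Fin n`. -/
def descSet {n : ℕ} (σ : Equiv.Perm (Fin n)) : Finset (Fin n) :=
  Finset.univ.filter (fun k => ∃ m : Fin n, (m : ℕ) = (k : ℕ) + 1 ∧ σ m < σ k)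

/-- The number of descents of a permutation of `Fin n`. -/
def des {n : ℕ} (σ : Equiv.Perm (Fin n)) : ℕ := (descSet σ).card

/-- `A d i j` : the number of permutations `σ` of `{1,…,d}` with `σ(1) = j` and
exactly `i` descents (in particular `A d i j = 0` for `i < 0` or `i ≥ d`). -/
noncomputable def A (d : ℕ) (i : ℤ) (j : ℕ) : ℕ :=
  Nat.card {σ : Equiv.Perm (Fin d) //
    (∀ k : Fin d, (k : ℕ) = 0 → (σ k : ℕ) + 1 = j) ∧ (des σ : ℤ) = i}

open Equiv

/-- Delete the first entry of a permutation and standardize. -/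
def Fdel {n : ℕ} (σ : Perm (Fin (n+1))) : Perm (Fin n) :=
  Equiv.removeNone ((finSuccEquiv n).symm.trans (σ.trans (finSuccEquiv' (σ 0))))

/-- Insert `a` as the first entry (shifting values `≥ a` up). -/
def Gins {n : ℕ} (a : Fin (n+1)) (τ : Perm (Fin n)) : Perm (Fin (n+1)) :=
  (finSuccEquiv n).trans ((Equiv.optionCongr τ).trans (finSuccEquiv' a).symm)

lemma Fdel_spec {n : ℕ} (σ : Perm (Fin (n+1))) (k : Fin n) :
    (σ 0).succAbove (Fdel σ k) = σ k.succ := by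
  set e := (finSuccEquiv n).symm.trans (σ.trans (finSuccEquiv' (σ 0))) with he
  have h1 : e (some k) = finSuccEquiv' (σ 0) (σ k.succ) := by
    simp [he, Equiv.trans_apply]
  have hne : σ k.succ ≠ σ 0 := fun h => by
    have := σ.injective h
    exact (Fin.succ_ne_zero k) this
  obtain ⟨x, hx⟩ := Fin.exists_succAbove_eq hne
  have h2 : e (some k) = some x := by
    rw [h1, ← hx, finSuccEquiv'_succAbove]
  have h3 : some (Equiv.removeNone e k) = some x := by
    rw [Equiv.removeNone_some e ⟨x, h2⟩, h2]
  have h4 : Fdel σ k = x := by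
    have := Option.some_injective _ h3
    simpa [Fdel, ← he] using this
  rw [h4, hx]

lemma Gins_zero {n : ℕ} (a : Fin (n+1)) (τ : Perm (Fin n)) : Gins a τ 0 = a := by
  simp [Gins, Equiv.trans_apply, finSuccEquiv_zero, finSuccEquiv'_symm_none]

lemma Gins_succ {n : ℕ} (a : Fin (n+1)) (τ : Perm (Fin n)) (k : Fin n) :
    Gins a τ k.succ = a.succAbove (τ k) := by
  simp [Gins, Equiv.trans_apply, finSuccEquiv_succ, finSuccEquiv'_symm_some]

lemma Fdel_Gins {n : ℕ} (a : Fin (n+1)) (τ : Perm (Fin n)) : Fdel (Gins a τ) = τ := by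
  refine Equiv.ext fun k => ?_
  have h := Fdel_spec (Gins a τ) k
  rw [Gins_zero, Gins_succ] at h
  exact Fin.succAbove_right_injective h

lemma Gins_Fdel {n : ℕ} (σ : Perm (Fin (n+1))) (a : Fin (n+1)) (ha : σ 0 = a) :
    Gins a (Fdel σ) = σ := by
  refine Equiv.ext fun x => ?_
  induction x using Fin.cases with
  | zero => rw [Gins_zero, ha]
  | succ k => rw [Gins_succ, ← ha, Fdel_spec]

lemma mem_descSet_castSucc {n : ℕ} (σ : Perm (Fin (n+1))) (k : Fin n) :
    k.castSucc ∈ descSet σ ↔ σ k.succ < σ k.castSucc := by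
  simp only [descSet, mem_filter, mem_univ, true_and]
  constructor
  · rintro ⟨m, hm, h⟩
    have : m = k.succ := Fin.ext (by simpa using hm)
    subst this; exact h
  · intro h; exact ⟨k.succ, by simp, h⟩

lemma descSet_eq {n : ℕ} (σ : Perm (Fin (n+1))) :
    descSet σ = (univ.filter fun k : Fin n => σ k.succ < σ k.castSucc).image Fin.castSucc := by
  ext k
  constructor
  · intro hk
    have hkn : (k : ℕ) < n := by
      obtain ⟨-, m, hm, -⟩ := mem_filter.mp hk
      have := m.isLt; omega
    have h2 : Fin.castSucc ⟨(k : ℕ), hkn⟩ = k := Fin.ext rfl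
    rw [mem_image]
    refine ⟨⟨(k : ℕ), hkn⟩, ?_, h2⟩
    rw [mem_filter]
    exact ⟨mem_univ _, (mem_descSet_castSucc σ _).mp (by rwa [h2])⟩
  · intro hk
    obtain ⟨x, hx, rfl⟩ := mem_image.mp hk
    exact (mem_descSet_castSucc σ x).mpr (mem_filter.mp hx).2

lemma des_eq_card {n : ℕ} (σ : Perm (Fin (n+1))) :
    des σ = (univ.filter fun k : Fin n => σ k.succ < σ k.castSucc).card := by
  rw [des, descSet_eq, card_image_of_injective _ (Fin.castSucc_injective n)]

lemma des_le {n : ℕ} (σ : Perm (Fin (n+1))) : des σ ≤ n := by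
  calc des σ ≤ (univ : Finset (Fin n)).card := by rw [des_eq_card]; exact card_filter_le _ _
  _ = n := by simp

lemma des_succ {n : ℕ} (σ : Perm (Fin (n+2))) :
    des σ = (if (Fdel σ 0 : ℕ) < (σ 0 : ℕ) then 1 else 0) + des (Fdel σ) := by
  rw [des_eq_card σ, des_eq_card (Fdel σ), Finset.card_filter, Finset.card_filter,
    Fin.sum_univ_succ]
  congr 1
  · rw [Fin.castSucc_zero, ← Fdel_spec σ 0]
    refine if_congr ?_ rfl rfl
    rw [Fin.succAbove_lt_iff_castSucc_lt]
    simp [Fin.lt_def]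
  · apply Finset.sum_congr rfl
    intro k _
    have h2 : σ (k.succ).succ < σ (k.succ).castSucc ↔ Fdel σ k.succ < Fdel σ k.castSucc := by
      rw [← Fdel_spec σ k.succ, ← Fin.succ_castSucc, ← Fdel_spec σ k.castSucc,
        Fin.succAbove_lt_succAbove_iff]
    exact if_congr h2 rfl rfl

lemma A_eq_card (n : ℕ) (i : ℤ) (j : ℕ) [DecidablePred fun σ : Perm (Fin (n+1)) =>
      (σ 0 : ℕ) + 1 = j ∧ (des σ : ℤ) = i] :
    A (n+1) i j = ((univ : Finset (Perm (Fin (n+1)))).filter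
      fun σ => (σ 0 : ℕ) + 1 = j ∧ (des σ : ℤ) = i).card := by
  classical
  rw [A, Nat.card_eq_fintype_card, Fintype.card_subtype]
  congr 1
  ext σ
  simp only [mem_filter, mem_univ, true_and]
  constructor
  · rintro ⟨h1, h2⟩; exact ⟨h1 0 rfl, h2⟩
  · rintro ⟨h1, h2⟩
    refine ⟨fun k hk => ?_, h2⟩
    have : k = 0 := Fin.ext (by simpa using hk)
    rwa [this]

lemma A_neg (n : ℕ) (i : ℤ) (j : ℕ) (hi : i < 0) : A n i j = 0 := by
  have : IsEmpty {σ : Perm (Fin n) //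
      (∀ k : Fin n, (k : ℕ) = 0 → (σ k : ℕ) + 1 = j) ∧ (des σ : ℤ) = i} := by
    refine ⟨fun ⟨σ, _, h⟩ => ?_⟩
    have h0 : (0 : ℤ) ≤ i := h ▸ Int.natCast_nonneg (des σ)
    omega
  rw [A, Nat.card_of_isEmpty]

lemma A_large (n : ℕ) (i : ℤ) (j : ℕ) (hi : (n : ℤ) < i) : A (n+1) i j = 0 := by
  have : IsEmpty {σ : Perm (Fin (n+1)) //
      (∀ k : Fin (n+1), (k : ℕ) = 0 → (σ k : ℕ) + 1 = j) ∧ (des σ : ℤ) = i} := by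
    refine ⟨fun ⟨σ, _, h⟩ => ?_⟩
    have h1 := des_le σ
    have h2 : i ≤ (n : ℤ) := h ▸ (by exact_mod_cast h1)
    omega
  rw [A, Nat.card_of_isEmpty]

lemma A_rec (n : ℕ) (i : ℤ) (j : ℕ) (hj : j ≤ n + 1) :
    A (n+2) i (j+1) =
      ∑ m ∈ range (n+1), A (n+1) (i - if m < j then 1 else 0) (m+1) := by
  classical
  rw [A_eq_card]
  have hjlt : j < n + 2 := by omega
  have key : ∀ σ : Perm (Fin (n+2)), (σ 0 : ℕ) = j →
      (des σ : ℤ) = (des (Fdel σ) : ℤ) + (if ((Fdel σ) 0 : ℕ) < j then 1 else 0) := by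
    intro σ hσ
    rw [des_succ σ, hσ]
    push_cast
    split <;> ring
  rw [Finset.card_eq_sum_card_fiberwise (f := fun σ => ((Fdel σ 0 : ℕ)))
      (t := range (n+1)) (fun σ _ => mem_range.mpr (Fdel σ 0).isLt)]
  apply Finset.sum_congr rfl
  intro m hm
  rw [A_eq_card]
  set a : Fin (n+2) := ⟨j, hjlt⟩ with ha
  apply Finset.card_bij' (fun σ _ => Fdel σ) (fun τ _ => Gins a τ)
  · -- maps into target
    intro σ hσ
    simp only [mem_filter, mem_univ, true_and] at hσ ⊢
    obtain ⟨⟨h1, h2⟩, h3⟩ := hσ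
    refine ⟨by omega, ?_⟩
    have hk := key σ (by omega)
    rw [hk, h3] at h2
    split_ifs at h2 ⊢ <;> omega
  · -- maps back into source
    intro τ hτ
    simp only [mem_filter, mem_univ, true_and] at hτ ⊢
    obtain ⟨h1, h2⟩ := hτ
    have hz : Gins a τ 0 = a := Gins_zero a τ
    have hF : Fdel (Gins a τ) = τ := Fdel_Gins a τ
    have h0 : ((Gins a τ) 0 : ℕ) = j := by rw [hz]
    refine ⟨⟨by omega, ?_⟩, by rw [hF]; omega⟩
    rw [key (Gins a τ) h0, hF]
    have hm0 : (τ 0 : ℕ) = m := by omega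
    rw [hm0]
    split_ifs at h2 ⊢ <;> omega
  · intro σ hσ
    simp only [mem_filter, mem_univ, true_and] at hσ
    exact Gins_Fdel σ a (Fin.ext (by simp [ha]; omega))
  · intro τ hτ
    exact Fdel_Gins a τ

open PowerSeries

lemma coeff_mul_one_sub_X_zero (f : PowerSeries ℚ) :
    PowerSeries.coeff (R := ℚ) 0 (f * (1 - PowerSeries.X)) = PowerSeries.coeff (R := ℚ) 0 f := by
  rw [mul_sub, mul_one, map_sub, PowerSeries.coeff_zero_mul_X, sub_zero]

lemma coeff_mul_one_sub_X_succ (f : PowerSeries ℚ) (n : ℕ) :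
    PowerSeries.coeff (R := ℚ) (n+1) (f * (1 - PowerSeries.X)) =
      PowerSeries.coeff (R := ℚ) (n+1) f - PowerSeries.coeff (R := ℚ) n f := by
  rw [mul_sub, mul_one, map_sub, PowerSeries.coeff_succ_mul_X]

lemma geom_helper (y : ℚ) (n : ℕ) :
    ∑ m ∈ range n, y ^ m * (y + 1) ^ (n - 1 - m) = (y + 1) ^ n - y ^ n := by
  have h := geom_sum₂_mul y (y + 1) n
  have h2 : y - (y + 1) = -1 := by ring
  rw [h2] at h
  linarith [h]

lemma key_ps (d j : ℕ) (hj : j ≤ d + 1) :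
    PowerSeries.X * (∑ m ∈ range j,
        PowerSeries.mk (fun r : ℕ => (r : ℚ) ^ m * ((r : ℚ) + 1) ^ (d - m)))
      + ∑ m ∈ Finset.Ico j (d+1),
          PowerSeries.mk (fun r : ℕ => (r : ℚ) ^ m * ((r : ℚ) + 1) ^ (d - m))
    = PowerSeries.mk (fun r : ℕ => (r : ℚ) ^ j * ((r : ℚ) + 1) ^ (d + 1 - j))
        * (1 - PowerSeries.X) := by
  ext r
  rw [map_add, map_sum]
  cases r with
  | zero =>
    rw [coeff_mul_one_sub_X_zero, PowerSeries.coeff_mk]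
    rw [mul_comm, PowerSeries.coeff_zero_mul_X]
    simp only [PowerSeries.coeff_mk, Nat.cast_zero, zero_add, one_pow, mul_one, zero_add]
    by_cases hj0 : j = 0
    · subst hj0
      rw [pow_zero, Finset.sum_eq_single_of_mem 0 (by simp)
        (fun m _ hm => by simp [zero_pow hm]), pow_zero]
    · rw [zero_pow hj0]
      refine Finset.sum_eq_zero fun m hm => ?_
      have hm0 : m ≠ 0 := by have := (Finset.mem_Ico.mp hm).1; omega
      simp [zero_pow hm0]
  | succ s =>
    rw [coeff_mul_one_sub_X_succ, PowerSeries.coeff_mk, PowerSeries.coeff_mk,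
      mul_comm PowerSeries.X _, PowerSeries.coeff_succ_mul_X, map_sum]
    simp only [PowerSeries.coeff_mk]
    push_cast
    set x : ℚ := (s : ℚ) with hx
    have h1 : ∑ m ∈ range j, x ^ m * (x + 1) ^ (d - m)
        = ((x + 1) ^ j - x ^ j) * (x + 1) ^ (d + 1 - j) := by
      have hc : ∀ m ∈ range j, x ^ m * (x + 1) ^ (d - m)
          = (x ^ m * (x + 1) ^ (j - 1 - m)) * (x + 1) ^ (d + 1 - j) := by
        intro m hm
        rw [mem_range] at hm
        rw [mul_assoc, ← pow_add]
        have he : j - 1 - m + (d + 1 - j) = d - m := by omega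
        rw [he]
      rw [Finset.sum_congr rfl hc, ← Finset.sum_mul, geom_helper]
    have h2 : ∑ m ∈ Finset.Ico j (d+1), (x + 1) ^ m * (x + 1 + 1) ^ (d - m)
        = (x + 1) ^ j * ((x + 1 + 1) ^ (d + 1 - j) - (x + 1) ^ (d + 1 - j)) := by
      rw [Finset.sum_Ico_eq_sum_range]
      have hc : ∀ m ∈ range (d + 1 - j), (x + 1) ^ (j + m) * (x + 1 + 1) ^ (d - (j + m))
          = (x + 1) ^ j * ((x + 1) ^ m * ((x + 1) + 1) ^ ((d + 1 - j) - 1 - m)) := by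
        intro m hm
        rw [mem_range] at hm
        rw [pow_add, mul_assoc]
        have he : d - (j + m) = (d + 1 - j) - 1 - m := by omega
        rw [he]
      rw [Finset.sum_congr rfl hc, ← Finset.mul_sum, geom_helper]
    rw [h1, h2]
    ring


lemma X_mul_monomial (n : ℕ) (c : ℚ) :
    PowerSeries.X * PowerSeries.monomial (R := ℚ) n c = PowerSeries.monomial (R := ℚ) (n+1) c := by
  ext k
  cases k with
  | zero =>
    rw [mul_comm, PowerSeries.coeff_zero_mul_X, PowerSeries.coeff_monomial]
    simp
  | succ k =>
    rw [mul_comm, PowerSeries.coeff_succ_mul_X, PowerSeries.coeff_monomial,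
      PowerSeries.coeff_monomial]
    exact (if_congr (by omega) rfl rfl).symm

lemma genfun : ∀ d : ℕ, ∀ j : ℕ, j ≤ d →
    (∑ i ∈ Finset.range (d + 1),
        PowerSeries.monomial (R := ℚ) i ((A (d + 1) (i : ℤ) (j + 1) : ℚ))) =
      PowerSeries.mk (fun r : ℕ => (r : ℚ) ^ j * ((r : ℚ) + 1) ^ (d - j)) *
        (1 - PowerSeries.X) ^ (d + 1) := by
  intro d
  induction d with
  | zero =>
    intro j hj
    interval_cases j
    have hA : A 1 ((0:ℕ) : ℤ) 1 = 1 := by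
      have hall : ∀ σ : Equiv.Perm (Fin 1),
          (∀ k : Fin 1, (k : ℕ) = 0 → (σ k : ℕ) + 1 = 1) ∧ (des σ : ℤ) = ((0:ℕ):ℤ) := by
        intro σ
        refine ⟨fun k _ => ?_, ?_⟩
        · have h0 : σ k = 0 := Subsingleton.elim _ _
          simp [h0]
        · have h1 : des σ ≤ 0 := des_le (n := 0) σ
          omega
      rw [A, Nat.card_congr (Equiv.subtypeUnivEquiv hall), Nat.card_eq_fintype_card]
      simp
    rw [Finset.sum_range_one, hA]
    ext k
    cases k with
    | zero =>
      rw [pow_one, coeff_mul_one_sub_X_zero, PowerSeries.coeff_mk, PowerSeries.coeff_monomial]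
      norm_num
    | succ k =>
      rw [pow_one, coeff_mul_one_sub_X_succ, PowerSeries.coeff_mk, PowerSeries.coeff_mk,
        PowerSeries.coeff_monomial]
      norm_num
  | succ d ih =>
    intro j hj
    show (∑ i ∈ Finset.range (d + 2),
        PowerSeries.monomial (R := ℚ) i ((A (d + 2) (i : ℤ) (j + 1) : ℚ))) =
      PowerSeries.mk (fun r : ℕ => (r : ℚ) ^ j * ((r : ℚ) + 1) ^ (d + 1 - j)) *
        (1 - PowerSeries.X) ^ (d + 2)
    have step1 : (∑ i ∈ Finset.range (d + 2),
        PowerSeries.monomial (R := ℚ) i ((A (d + 2) (i : ℤ) (j + 1) : ℚ)))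
        = ∑ m ∈ range (d+1), ∑ i ∈ range (d+2),
            PowerSeries.monomial (R := ℚ) i
              ((A (d+1) ((i:ℤ) - if m < j then 1 else 0) (m+1) : ℚ)) := by
      rw [Finset.sum_comm]
      refine Finset.sum_congr rfl fun i _ => ?_
      rw [← map_sum]
      congr 1
      rw [A_rec d (i:ℤ) j (by omega)]
      push_cast
      rfl
    have inner : ∀ m ∈ range (d+1),
        (∑ i ∈ range (d+2), PowerSeries.monomial (R := ℚ) i
            ((A (d+1) ((i:ℤ) - if m < j then 1 else 0) (m+1) : ℚ)))
        = (if m < j then PowerSeries.X else 1) *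
          (PowerSeries.mk (fun r : ℕ => (r:ℚ)^m * ((r:ℚ)+1)^(d-m)) *
            (1 - PowerSeries.X)^(d+1)) := by
      intro m hm
      rw [mem_range] at hm
      by_cases hmj : m < j
      · simp only [if_pos hmj]
        rw [Finset.sum_range_succ']
        have h0 : (A (d+1) (((0:ℕ):ℤ) - 1) (m+1) : ℚ) = 0 := by
          rw [A_neg _ _ _ (by norm_num)]
          norm_num
        rw [h0, map_zero, add_zero]
        have hterm : ∀ i ∈ range (d+1),
            PowerSeries.monomial (R := ℚ) (i+1)
              ((A (d+1) (((i+1:ℕ):ℤ) - 1) (m+1) : ℚ))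
            = PowerSeries.X * PowerSeries.monomial (R := ℚ) i ((A (d+1) ((i:ℕ):ℤ) (m+1) : ℚ)) := by
          intro i _
          rw [X_mul_monomial]
          congr 2
          push_cast
          ring
        rw [Finset.sum_congr rfl hterm, ← Finset.mul_sum, ih m (by omega)]
      · simp only [if_neg hmj, sub_zero, one_mul]
        rw [Finset.sum_range_succ]
        have hlast : (A (d+1) (((d+1:ℕ)):ℤ) (m+1) : ℚ) = 0 := by
          rw [A_large _ _ _ (by push_cast; omega)]
          norm_num
        rw [hlast, map_zero, add_zero, ih m (by omega)]
    rw [step1, Finset.sum_congr rfl inner]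
    have split : ∑ m ∈ range (d+1),
        (if m < j then PowerSeries.X else 1) *
          (PowerSeries.mk (fun r : ℕ => (r:ℚ)^m * ((r:ℚ)+1)^(d-m)) *
            (1 - PowerSeries.X)^(d+1))
        = (PowerSeries.X * (∑ m ∈ range j,
              PowerSeries.mk (fun r : ℕ => (r : ℚ) ^ m * ((r : ℚ) + 1) ^ (d - m)))
            + ∑ m ∈ Finset.Ico j (d+1),
                PowerSeries.mk (fun r : ℕ => (r : ℚ) ^ m * ((r : ℚ) + 1) ^ (d - m)))
          * (1 - PowerSeries.X)^(d+1) := by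
      rw [add_mul, Finset.mul_sum, Finset.sum_mul, Finset.sum_mul, Finset.range_eq_Ico,
        ← Finset.sum_Ico_consecutive _ (Nat.zero_le j) (by omega : j ≤ d+1),
        ← Finset.range_eq_Ico]
      congr 1
      · refine Finset.sum_congr rfl fun m hm => ?_
        rw [mem_range] at hm
        rw [if_pos hm, mul_assoc]
      · refine Finset.sum_congr rfl fun m hm => ?_
        have := (Finset.mem_Ico.mp hm).1
        rw [if_neg (by omega), one_mul]
    rw [split, key_ps d j hj]
    rw [pow_succ]
    ring


open PowerSeries in
/-- The generating function identity
`(Σ_{i=0}^{d} A(d+1,i,j+1) tⁱ) / (1-t)^{d+1} = Σ_{r≥0} rʲ (r+1)^{d-j} tʳ`,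
stated as an identity of formal power series over `ℚ`. -/
theorem A_generating_function (d j : ℕ) (hd : 1 ≤ d) (hj : j ≤ d) :
    (∑ i ∈ Finset.range (d + 1),
        PowerSeries.monomial (R := ℚ) i ((A (d + 1) (i : ℤ) (j + 1) : ℚ))) =
      PowerSeries.mk
          (fun r : ℕ => (r : ℚ) ^ j * ((r : ℚ) + 1) ^ (d - j)) *
        (1 - PowerSeries.X) ^ (d + 1) :=
  genfun d j hj
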